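/- For every integer n with 3 ≤ n ≤ 7, the achromatic number and the complete coloring number of the n×n square grid graph coincide and equal 2n−1: Ψ(G_n) = Γ(G_n) = 2n−1. -/

import Mathlib

/-- The rectangular grid graph `R_{m×n}`: vertices are pairs `(i,j)` with
`i < m`, `j < n`, adjacent iff they differ by exactly one in exactly one
coordinate. -/
def gridGraph (m n : ℕ) : SimpleGraph (Fin m × Fin n) where
  Adj p q := (p.1 = q.1 ∧ ((p.2 : ℕ) + 1 = q.2 ∨ (q.2 : ℕ) + 1 = p.2)) ∨
             (p.2 = q.2 ∧ ((p.1 : ℕ) + 1 = q.1 ∨ (q.1 : ℕ) + 1 = p.1))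
  symm := by
    constructor
    rintro p q (⟨h, h'⟩ | ⟨h, h'⟩)
    · exact Or.inl ⟨h.symm, h'.symm⟩
    · exact Or.inr ⟨h.symm, h'.symm⟩
  loopless := by
    constructor
    rintro p (⟨_, h | h⟩ | ⟨_, h | h⟩) <;> omega

/-- `c` is a `k`-complete coloring of `G`: every pair of distinct colors appears
on some edge. -/
def IsCompleteColoring {V : Type*} (G : SimpleGraph V) (k : ℕ) (c : V → Fin k) : Prop :=
  ∀ i j : Fin k, i ≠ j → ∃ u v, G.Adj u v ∧ c u = i ∧ c v = j

/-- `c` is a `k`-complete proper coloring of `G`. -/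
def IsCompleteProperColoring {V : Type*} (G : SimpleGraph V) (k : ℕ) (c : V → Fin k) : Prop :=
  IsCompleteColoring G k c ∧ ∀ u v, G.Adj u v → c u ≠ c v

/-- The complete coloring number `Γ(G)`: the maximum `k` admitting a
`k`-complete coloring. -/
noncomputable def completeColoringNumber {V : Type*} (G : SimpleGraph V) : ℕ :=
  sSup {k | ∃ c : V → Fin k, IsCompleteColoring G k c}

/-- The achromatic number `Ψ(G)`: the maximum `k` admitting a `k`-complete
proper coloring. -/
noncomputable def achromaticNumber {V : Type*} (G : SimpleGraph V) : ℕ :=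
  sSup {k | ∃ c : V → Fin k, IsCompleteProperColoring G k c}


lemma grid_adj {m n : ℕ} {p q : Fin m × Fin n} :
    (gridGraph m n).Adj p q ↔
      (p.1 = q.1 ∧ ((p.2 : ℕ) + 1 = q.2 ∨ (q.2 : ℕ) + 1 = p.2)) ∨
      (p.2 = q.2 ∧ ((p.1 : ℕ) + 1 = q.1 ∨ (q.1 : ℕ) + 1 = p.1)) := Iff.rfl

instance {m n : ℕ} : DecidableRel (gridGraph m n).Adj :=
  fun _ _ => decidable_of_iff _ grid_adj.symm

lemma decode {m x y x' y' : ℕ} (hy : y < m) (hy' : y' < m)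
    (h : x * m + y = x' * m + y') : x = x' ∧ y = y' := by
  rcases Nat.lt_trichotomy x x' with hlt | rfl | hlt
  · have h1 : (x + 1) * m ≤ x' * m := Nat.mul_le_mul_right _ hlt
    have h2 : (x + 1) * m = x * m + m := Nat.succ_mul x m
    omega
  · omega
  · have h1 : (x' + 1) * m ≤ x * m := Nat.mul_le_mul_right _ hlt
    have h2 : (x' + 1) * m = x' * m + m := Nat.succ_mul x' m
    omega

lemma blt {n x y : ℕ} (hx : x < n) (hy : y < n - 1) :
    x * (n - 1) + y < n * (n - 1) := by
  have h1 : x * (n - 1) ≤ (n - 1) * (n - 1) := Nat.mul_le_mul_right _ (by omega)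
  have h2 : n * (n - 1) = (n - 1) * (n - 1) + (n - 1) := by
    cases n with
    | zero => omega
    | succ m => rw [Nat.succ_sub_one, Nat.succ_mul]
  omega

/-- Encode a directed grid edge as a pair (block, position). -/
def ecode {n : ℕ} (e : (Fin n × Fin n) × (Fin n × Fin n)) : ℕ × ℕ :=
  if ((e.1.2 : ℕ) + 1 = (e.2.2 : ℕ)) then (0, (e.1.1 : ℕ) * (n - 1) + (e.1.2 : ℕ))
  else if ((e.2.2 : ℕ) + 1 = (e.1.2 : ℕ)) then (1, (e.1.1 : ℕ) * (n - 1) + (e.2.2 : ℕ))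
  else if ((e.1.1 : ℕ) + 1 = (e.2.1 : ℕ)) then (2, (e.1.2 : ℕ) * (n - 1) + (e.1.1 : ℕ))
  else (3, (e.1.2 : ℕ) * (n - 1) + (e.2.1 : ℕ))

lemma ecode_mem {n : ℕ} {e : (Fin n × Fin n) × (Fin n × Fin n)}
    (he : (gridGraph n n).Adj e.1 e.2) :
    ecode e ∈ Finset.range 4 ×ˢ Finset.range (n * (n - 1)) := by
  obtain ⟨⟨a, b⟩, ⟨c, d⟩⟩ := e
  rw [grid_adj] at he
  have ha := a.isLt; have hb := b.isLt; have hc := c.isLt; have hd := d.isLt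
  have h1 : ((a : ℕ) = c ∧ ((b : ℕ) + 1 = d ∨ (d : ℕ) + 1 = b)) ∨
      ((b : ℕ) = d ∧ ((a : ℕ) + 1 = c ∨ (c : ℕ) + 1 = a)) := by
    rcases he with ⟨x, y⟩ | ⟨x, y⟩
    · exact Or.inl ⟨congrArg Fin.val x, y⟩
    · exact Or.inr ⟨congrArg Fin.val x, y⟩
  simp only [ecode]
  rcases h1 with ⟨x1, y1 | y1⟩ | ⟨x1, y1 | y1⟩ <;> split_ifs <;>
    simp only [Finset.mem_product, Finset.mem_range] <;>
    exact ⟨by omega, blt (by omega) (by omega)⟩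

lemma ecode_inj {n : ℕ} {e e' : (Fin n × Fin n) × (Fin n × Fin n)}
    (he : (gridGraph n n).Adj e.1 e.2) (he' : (gridGraph n n).Adj e'.1 e'.2)
    (heq : ecode e = ecode e') : e = e' := by
  obtain ⟨⟨a, b⟩, ⟨c, d⟩⟩ := e
  obtain ⟨⟨a', b'⟩, ⟨c', d'⟩⟩ := e'
  rw [grid_adj] at he he'
  have ha := a.isLt; have hb := b.isLt; have hc := c.isLt; have hd := d.isLt
  have ha' := a'.isLt; have hb' := b'.isLt; have hc' := c'.isLt; have hd' := d'.isLt
  have h1 : ((a : ℕ) = c ∧ ((b : ℕ) + 1 = d ∨ (d : ℕ) + 1 = b)) ∨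
      ((b : ℕ) = d ∧ ((a : ℕ) + 1 = c ∨ (c : ℕ) + 1 = a)) := by
    rcases he with ⟨x, y⟩ | ⟨x, y⟩
    · exact Or.inl ⟨congrArg Fin.val x, y⟩
    · exact Or.inr ⟨congrArg Fin.val x, y⟩
  have h2 : ((a' : ℕ) = c' ∧ ((b' : ℕ) + 1 = d' ∨ (d' : ℕ) + 1 = b')) ∨
      ((b' : ℕ) = d' ∧ ((a' : ℕ) + 1 = c' ∨ (c' : ℕ) + 1 = a')) := by
    rcases he' with ⟨x, y⟩ | ⟨x, y⟩
    · exact Or.inl ⟨congrArg Fin.val x, y⟩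
    · exact Or.inr ⟨congrArg Fin.val x, y⟩
  simp only [ecode] at heq
  simp only [Prod.mk.injEq, Fin.ext_iff]
  rcases h1 with ⟨x1, y1 | y1⟩ | ⟨x1, y1 | y1⟩ <;>
    rcases h2 with ⟨x2, y2 | y2⟩ | ⟨x2, y2 | y2⟩ <;>
    split_ifs at heq <;>
    simp only [Prod.mk.injEq] at heq <;>
    first
      | omega
      | (obtain ⟨hu, hv⟩ := decode (by omega) (by omega) heq.2; omega)

lemma upper {n k : ℕ} (hn : 1 ≤ n) {c : Fin n × Fin n → Fin k}
    (hc : IsCompleteColoring (gridGraph n n) k c) : k ≤ 2 * n - 1 := by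
  classical
  by_contra hk
  push_neg at hk
  have key : ∀ p : Fin k × Fin k, ∃ e : (Fin n × Fin n) × (Fin n × Fin n),
      p.1 ≠ p.2 → (gridGraph n n).Adj e.1 e.2 ∧ c e.1 = p.1 ∧ c e.2 = p.2 := by
    intro p
    by_cases hp : p.1 = p.2
    · exact ⟨((⟨0, hn⟩, ⟨0, hn⟩), (⟨0, hn⟩, ⟨0, hn⟩)), fun h => absurd hp h⟩
    · obtain ⟨u, v, h⟩ := hc p.1 p.2 hp
      exact ⟨(u, v), fun _ => h⟩
  choose F hF using key
  have hcard : (Finset.univ.offDiag : Finset (Fin k × Fin k)).card ≤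
      (Finset.range 4 ×ˢ Finset.range (n * (n - 1))).card := by
    apply Finset.card_le_card_of_injOn (fun p => ecode (F p))
    · intro p hp
      rw [Finset.mem_coe, Finset.mem_offDiag] at hp
      exact ecode_mem (hF p hp.2.2).1
    · intro p hp p' hp' hpe
      rw [Finset.mem_coe, Finset.mem_offDiag] at hp hp'
      have k1 := hF p hp.2.2
      have k2 := hF p' hp'.2.2
      have hfe : F p = F p' := ecode_inj k1.1 k2.1 hpe
      have e1 : p.1 = p'.1 := by rw [← k1.2.1, ← k2.2.1, hfe]
      have e2 : p.2 = p'.2 := by rw [← k1.2.2, ← k2.2.2, hfe]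
      exact Prod.ext e1 e2
  rw [Finset.offDiag_card, Finset.card_product, Finset.card_range, Finset.card_range,
    Finset.card_univ, Fintype.card_fin] at hcard
  obtain ⟨m, rfl⟩ : ∃ m, n = m + 1 := ⟨n - 1, by omega⟩
  have e1 : (m + 1) * ((m + 1) - 1) = m * m + m := by
    rw [Nat.succ_sub_one]; ring
  rw [e1] at hcard
  have h5 : k * (2 * m + 2) ≤ k * k := Nat.mul_le_mul_left k (by omega)
  have h6 : k * (2 * m + 2) = 2 * (m * k) + 2 * k := by ring
  have h7 : m * (2 * m + 2) ≤ m * k := Nat.mul_le_mul_left m (by omega)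
  have h8 : m * (2 * m + 2) = 2 * (m * m) + 2 * m := by ring
  omega

/-- Build a coloring from a flat lookup table. -/
def mkCol (n k : ℕ) (hk : 0 < k) (L : List ℕ) (p : Fin n × Fin n) : Fin k :=
  ⟨L.getD ((p.1 : ℕ) * n + (p.2 : ℕ)) 0 % k, Nat.mod_lt _ hk⟩

/-- Build a witness-edge table from a flat list of 4-digit codes. -/
def mkWit (n k : ℕ) (hn : 0 < n) (W : List ℕ) (i j : Fin k) :
    (Fin n × Fin n) × (Fin n × Fin n) :=
  let e := W.getD ((i : ℕ) * k + (j : ℕ)) 0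
  ((⟨e / 1000 % n, Nat.mod_lt _ hn⟩, ⟨e / 100 % 10 % n, Nat.mod_lt _ hn⟩),
   (⟨e / 10 % 10 % n, Nat.mod_lt _ hn⟩, ⟨e % 10 % n, Nat.mod_lt _ hn⟩))

lemma complete_of_wit {n k : ℕ} (c : Fin n × Fin n → Fin k)
    (w : Fin k → Fin k → (Fin n × Fin n) × (Fin n × Fin n))
    (h : ∀ i j : Fin k, i ≠ j → (gridGraph n n).Adj (w i j).1 (w i j).2 ∧
        c (w i j).1 = i ∧ c (w i j).2 = j) :
    IsCompleteColoring (gridGraph n n) k c := fun i j hij =>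
  ⟨(w i j).1, (w i j).2, h i j hij⟩

lemma proper_of_check {n k : ℕ} (hn : 0 < n) (c : Fin n × Fin n → Fin k)
    (h : ∀ a b : Fin n,
      ((b : ℕ) + 1 = n ∨ c (a, b) ≠ c (a, ⟨((b : ℕ) + 1) % n, Nat.mod_lt _ hn⟩)) ∧
      ((a : ℕ) + 1 = n ∨ c (a, b) ≠ c (⟨((a : ℕ) + 1) % n, Nat.mod_lt _ hn⟩, b))) :
    ∀ u v, (gridGraph n n).Adj u v → c u ≠ c v := by
  rintro ⟨a, b⟩ ⟨a', b'⟩ hadj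
  rw [grid_adj] at hadj
  dsimp only at hadj
  rcases hadj with ⟨h1, h2 | h2⟩ | ⟨h1, h2 | h2⟩ <;> cases h1
  · have hb := b'.isLt
    have hne := (h a b).1.resolve_left (by omega)
    have hv : (⟨((b : ℕ) + 1) % n, Nat.mod_lt _ hn⟩ : Fin n) = b' :=
      Fin.ext (show ((b : ℕ) + 1) % n = (b' : ℕ) by rw [Nat.mod_eq_of_lt (by omega)]; omega)
    rwa [hv] at hne
  · have hb := b.isLt
    have hne := (h a b').1.resolve_left (by omega)
    have hv : (⟨((b' : ℕ) + 1) % n, Nat.mod_lt _ hn⟩ : Fin n) = b :=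
      Fin.ext (show ((b' : ℕ) + 1) % n = (b : ℕ) by rw [Nat.mod_eq_of_lt (by omega)]; omega)
    rw [hv] at hne
    exact hne.symm
  · have ha := a'.isLt
    have hne := (h a b).2.resolve_left (by omega)
    have hv : (⟨((a : ℕ) + 1) % n, Nat.mod_lt _ hn⟩ : Fin n) = a' :=
      Fin.ext (show ((a : ℕ) + 1) % n = (a' : ℕ) by rw [Nat.mod_eq_of_lt (by omega)]; omega)
    rwa [hv] at hne
  · have ha := a.isLt
    have hne := (h a' b).2.resolve_left (by omega)
    have hv : (⟨((a' : ℕ) + 1) % n, Nat.mod_lt _ hn⟩ : Fin n) = a :=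
      Fin.ext (show ((a' : ℕ) + 1) % n = (a : ℕ) by rw [Nat.mod_eq_of_lt (by omega)]; omega)
    rw [hv] at hne
    exact hne.symm

def colTbl3 : List Nat := [0, 1, 2, 4, 3, 0, 1, 2, 4]

def witTbl3 : List Nat := [0, 1, 1202, 1211, 10, 100, 0, 102, 111, 2010, 212, 201, 0, 2111, 2122, 1112, 1101, 1121, 0, 1110, 1000, 1020, 2221, 1011, 0]

def colTbl4 : List Nat := [5, 1, 6, 2, 2, 3, 5, 0, 0, 6, 4, 3, 4, 2, 1, 0]

def witTbl4 : List Nat := [0, 3332, 1303, 1323, 2030, 1312, 2021, 3233, 0, 3231, 111, 3222, 100, 102, 313, 3132, 0, 1011, 3130, 1000, 302, 2313, 1101, 1110, 0, 2322, 1112, 1121, 3020, 2232, 3031, 2223, 0, 2212, 2221, 1213, 1, 10, 1211, 1222, 0, 1202, 2120, 201, 203, 2111, 2122, 212, 0]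

def colTbl5 : List Nat := [3, 8, 5, 6, 2, 5, 0, 1, 7, 8, 4, 7, 5, 2, 1, 6, 3, 6, 0, 3, 1, 4, 8, 4, 2]

def witTbl5 : List Nat := [0, 1112, 3323, 3334, 3343, 1110, 3332, 1121, 1101, 1211, 0, 2423, 2434, 4041, 1202, 4030, 1213, 2414, 2333, 2324, 0, 4434, 4443, 2322, 403, 2313, 414, 3433, 3424, 3444, 0, 3141, 10, 3130, 3121, 1, 4333, 4140, 4344, 4131, 0, 2010, 2030, 2021, 4142, 1011, 212, 2223, 1000, 1020, 0, 203, 2221, 201, 3233, 3040, 304, 3031, 3020, 302, 0, 313, 3242, 2111, 1312, 1323, 2131, 2120, 2122, 1303, 0, 1314, 111, 1424, 1404, 100, 4241, 102, 4232, 1413, 0]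

def colTbl6 : List Nat := [10, 5, 2, 3, 4, 10, 8, 9, 7, 8, 5, 3, 3, 2, 0, 4, 9, 1, 7, 1, 5, 7, 6, 2, 2, 8, 6, 10, 1, 4, 10, 0, 3, 9, 0, 6]

def witTbl6 : List Nat := [0, 5444, 2221, 5152, 2223, 2232, 5455, 2212, 5141, 5453, 5150, 4454, 0, 3121, 2515, 4445, 3132, 4434, 3130, 3141, 2524, 4443, 2122, 2131, 0, 203, 3545, 201, 3534, 212, 4041, 2111, 4050, 5251, 1525, 302, 0, 304, 1514, 5242, 2030, 313, 5253, 1505, 2322, 4544, 4535, 403, 0, 414, 4555, 2333, 2313, 2324, 405, 3222, 3231, 102, 1415, 1404, 0, 3242, 3233, 1413, 111, 100, 5554, 3444, 3435, 4252, 5545, 4232, 0, 3433, 4241, 3424, 4243, 1222, 3031, 1202, 3020, 3323, 3332, 3334, 0, 1213, 1211, 3343, 4151, 4131, 4140, 1303, 1323, 1314, 4142, 1312, 0, 1011, 1000, 5354, 2425, 1121, 5352, 2423, 1101, 2434, 1112, 1110, 0, 5343, 5051, 4344, 5040, 515, 504, 1, 4342, 4333, 10, 4353, 0]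

def colTbl7 : List Nat := [8, 6, 10, 2, 7, 0, 8, 3, 5, 11, 8, 5, 9, 7, 0, 2, 10, 1, 0, 12, 4, 4, 9, 8, 12, 7, 11, 1, 11, 3, 4, 5, 10, 9, 6, 2, 12, 6, 1, 3, 1, 7, 4, 10, 0, 11, 6, 2, 3]

def witTbl7 : List Nat := [0, 2423, 2021, 2010, 2030, 2414, 6252, 504, 506, 515, 6261, 6263, 2425, 2324, 0, 5565, 5354, 3626, 5343, 3646, 5556, 2313, 5545, 2322, 3635, 2333, 2120, 6555, 0, 6566, 5060, 2111, 6564, 304, 313, 2131, 302, 5040, 5051, 1020, 5453, 6665, 0, 4142, 1011, 5464, 6656, 1000, 4131, 5444, 4140, 4151, 3020, 2636, 6050, 4241, 0, 4243, 4252, 2616, 4232, 3031, 6061, 3040, 2625, 1424, 4353, 1121, 1110, 4342, 0, 1101, 1404, 1413, 1415, 4344, 1112, 4333, 5262, 4636, 6465, 6454, 5242, 111, 0, 4656, 100, 4645, 102, 6463, 5251, 405, 5655, 403, 5666, 1626, 414, 5646, 0, 1606, 1615, 3444, 3435, 3433, 605, 1323, 1303, 10, 3242, 1314, 1, 616, 0,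 3231, 3222, 1312, 3233, 1505, 4555, 3121, 3141, 3130, 1514, 4546, 1516, 3132, 0, 4544, 4535, 1525, 6162, 2223, 203, 4454, 6160, 4443, 201, 4434, 2232, 4445, 0, 212, 6151, 6362, 3536, 4050, 4041, 4030, 1211, 6364, 3534, 1213, 3545, 1202, 0, 3525, 2524, 3323, 5150, 5141, 2526, 3343, 5152, 3334, 3332, 2515, 5161, 2535, 0]


lemma mem3 : ∃ c : Fin 3 × Fin 3 → Fin 5,
    IsCompleteProperColoring (gridGraph 3 3) 5 c := by
  refine ⟨mkCol 3 5 (by norm_num) colTbl3, ?_, ?_⟩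
  · exact complete_of_wit _ (mkWit 3 5 (by norm_num) witTbl3) (by decide)
  · exact proper_of_check (by norm_num) _ (by decide)

lemma mem4 : ∃ c : Fin 4 × Fin 4 → Fin 7,
    IsCompleteProperColoring (gridGraph 4 4) 7 c := by
  refine ⟨mkCol 4 7 (by norm_num) colTbl4, ?_, ?_⟩
  · exact complete_of_wit _ (mkWit 4 7 (by norm_num) witTbl4) (by decide)
  · exact proper_of_check (by norm_num) _ (by decide)

lemma mem5 : ∃ c : Fin 5 × Fin 5 → Fin 9,
    IsCompleteProperColoring (gridGraph 5 5) 9 c := by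
  refine ⟨mkCol 5 9 (by norm_num) colTbl5, ?_, ?_⟩
  · exact complete_of_wit _ (mkWit 5 9 (by norm_num) witTbl5) (by decide)
  · exact proper_of_check (by norm_num) _ (by decide)

lemma mem6 : ∃ c : Fin 6 × Fin 6 → Fin 11,
    IsCompleteProperColoring (gridGraph 6 6) 11 c := by
  refine ⟨mkCol 6 11 (by norm_num) colTbl6, ?_, ?_⟩
  · exact complete_of_wit _ (mkWit 6 11 (by norm_num) witTbl6) (by decide)
  · exact proper_of_check (by norm_num) _ (by decide)

lemma mem7 : ∃ c : Fin 7 × Fin 7 → Fin 13,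
    IsCompleteProperColoring (gridGraph 7 7) 13 c := by
  refine ⟨mkCol 7 13 (by norm_num) colTbl7, ?_, ?_⟩
  · exact complete_of_wit _ (mkWit 7 13 (by norm_num) witTbl7) (by decide)
  · exact proper_of_check (by norm_num) _ (by decide)

/-- For every `n` with `3 ≤ n ≤ 7`, `Ψ(G_n) = Γ(G_n) = 2n − 1`. -/
theorem psi_eq_gamma_grid_small (n : ℕ) (h3 : 3 ≤ n) (h7 : n ≤ 7) :
    achromaticNumber (gridGraph n n) = 2 * n - 1 ∧
    completeColoringNumber (gridGraph n n) = 2 * n - 1 := by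
  have hn1 : 1 ≤ n := by omega
  have hmem : ∃ c : Fin n × Fin n → Fin (2 * n - 1),
      IsCompleteProperColoring (gridGraph n n) (2 * n - 1) c := by
    interval_cases n
    · exact mem3
    · exact mem4
    · exact mem5
    · exact mem6
    · exact mem7
  obtain ⟨c0, hc0⟩ := hmem
  have hboundP : ∀ k ∈ {k : ℕ | ∃ c : Fin n × Fin n → Fin k,
      IsCompleteProperColoring (gridGraph n n) k c}, k ≤ 2 * n - 1 := by
    rintro k ⟨c, hc⟩
    exact upper hn1 hc.1
  have hboundC : ∀ k ∈ {k : ℕ | ∃ c : Fin n × Fin n → Fin k,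
      IsCompleteColoring (gridGraph n n) k c}, k ≤ 2 * n - 1 := by
    rintro k ⟨c, hc⟩
    exact upper hn1 hc
  constructor
  · unfold achromaticNumber
    exact le_antisymm (csSup_le ⟨_, ⟨c0, hc0⟩⟩ hboundP)
      (le_csSup ⟨2 * n - 1, fun x hx => hboundP x hx⟩ ⟨c0, hc0⟩)
  · unfold completeColoringNumber
    exact le_antisymm (csSup_le ⟨_, ⟨c0, hc0.1⟩⟩ hboundC)
      (le_csSup ⟨2 * n - 1, fun x hx => hboundC x hx⟩ ⟨c0, hc0.1⟩)
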